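/- Let M ≥ N ≥ 1 be integers, and for n ≥ 0 set f_n(x) = L_n^{(2(M−N))}(2Mx). Then for all integers j, k ≥ 0: ⟨f_j, f_k⟩_4 = (1/(2M))^{2(M−N)+1} · (j+2(M−N))!/(j−1)! if j = k+1 (with j ≥ 1); ⟨f_j, f_k⟩_4 = −(1/(2M))^{2(M−N)+1} · (k+2(M−N))!/(k−1)! if k = j+1 (with k ≥ 1); and ⟨f_j, f_k⟩_4 = 0 whenever |j − k| ≠ 1. -/

import Mathlib

open MeasureTheory

/-- The generalized Laguerre polynomial
`L_n^(α)(x) = ∑_{k=0}^{n} (-1)^k (n+α choose n-k) x^k / k!`. -/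
noncomputable def genLaguerre (n α : ℕ) (x : ℝ) : ℝ :=
  ∑ k ∈ Finset.range (n + 1),
    (-1 : ℝ) ^ k * ((n + α).choose (n - k) : ℝ) * x ^ k / (k.factorial : ℝ)

/-- The skew inner product
`⟨f, g⟩₄ = ∫_0^∞ (f(x) g'(x) - f'(x) g(x)) x^(2(M-N)+1) e^(-2Mx) dx`. -/
noncomputable def skewInner (M N : ℕ) (f g : ℝ → ℝ) : ℝ :=
  ∫ x in Set.Ioi (0 : ℝ),
    (f x * deriv g x - deriv f x * g x) * x ^ (2 * (M - N) + 1) *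
      Real.exp (-(2 * (M : ℝ)) * x)

open Finset

/-- Auxiliary alternating binomial sum. -/
def Sfun (n m α : ℕ) : ℤ :=
  ∑ k ∈ range (n + 1),
    (-1 : ℤ) ^ k * ((n + α).choose (n - k) : ℤ) * ((α + m + k).choose k : ℤ)

lemma Sfun_zero_left (m α : ℕ) : Sfun 0 m α = 1 := by
  simp [Sfun]

lemma Sfun_base (n α : ℕ) : Sfun n 0 α = if n = 0 then 1 else 0 := by
  have key : ∀ j ∈ range (n + 1),
      (-1 : ℤ) ^ (n - j) * ((n + α).choose (n - (n - j)) : ℤ) *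
        ((α + 0 + (n - j)).choose (n - j) : ℤ)
      = (-1) ^ n * ((n + α).choose α : ℤ) * ((-1) ^ j * (n.choose j : ℤ)) := by
    intro j hj
    rw [mem_range] at hj
    have hjn : j ≤ n := Nat.lt_succ_iff.mp hj
    have h1 : n - (n - j) = j := Nat.sub_sub_self hjn
    have h2 : (-1 : ℤ) ^ (n - j) = (-1) ^ n * (-1) ^ j := by
      have e : n + j = (n - j) + 2 * j := by omega
      have h : (-1 : ℤ) ^ (n + j) = (-1) ^ (n - j) := by
        rw [e, pow_add, pow_mul]; simp
      rw [← h, pow_add]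
    have h3 : (α + 0 + (n - j)).choose (n - j) = (α + (n - j)).choose α := by
      have := Nat.choose_symm (Nat.le_add_right α (n - j))
      simpa using this
    have h4 : (n + α).choose j * (α + (n - j)).choose α
        = (n + α).choose α * n.choose j := by
      have hsymm : (n + α).choose j = (n + α).choose (n + α - j) :=
        (Nat.choose_symm (by omega)).symm
      have hc := Nat.choose_mul (n := n + α) (k := n + α - j) (s := α)
        (by omega)
      have e1 : n + α - j = α + (n - j) := by omega
      have e2 : n + α - α = n := by omega
      have e3 : n + α - j - α = n - j := by omega
      rw [e1] at hc
      rw [hsymm, e1, hc, e2]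
      rw [show α + (n - j) - α = n - j from by omega, Nat.choose_symm hjn]
    have h4' : ((n + α).choose j : ℤ) * ((α + (n - j)).choose α : ℤ)
        = ((n + α).choose α : ℤ) * (n.choose j : ℤ) := by exact_mod_cast h4
    rw [h1, h2, h3]
    linear_combination ((-1 : ℤ) ^ n * (-1) ^ j) * h4'
  have reflect := Finset.sum_range_reflect
    (fun k => (-1 : ℤ) ^ k * ((n + α).choose (n - k) : ℤ) *
      ((α + 0 + k).choose k : ℤ)) (n + 1)
  unfold Sfun
  rw [← reflect]
  simp only [Nat.add_sub_cancel] at key ⊢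
  rw [Finset.sum_congr rfl key, ← Finset.mul_sum, Int.alternating_sum_range_choose]
  split_ifs with h
  · subst h; simp
  · simp

lemma Sfun_rec (n m α : ℕ) :
    Sfun (n + 1) (m + 1) α = Sfun (n + 1) m α - Sfun n m (α + 1) := by
  have expand : ∀ M : ℕ, Sfun (n + 1) M α
      = ((n + 1 + α).choose (n + 1) : ℤ) +
        ∑ k ∈ range (n + 1), (-1 : ℤ) ^ (k + 1) *
          ((n + 1 + α).choose (n - k) : ℤ) * ((α + M + (k + 1)).choose (k + 1) : ℤ) := by
    intro M
    unfold Sfun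
    rw [Finset.sum_range_succ' (fun k => (-1 : ℤ) ^ k *
      ((n + 1 + α).choose (n + 1 - k) : ℤ) * ((α + M + k).choose k : ℤ))]
    simp only [pow_zero, Nat.sub_zero, Nat.choose_zero_right, Nat.cast_one, one_mul, mul_one]
    rw [add_comm]
    congr 1
    exact Finset.sum_congr rfl fun k hk => by
      rw [show n + 1 - (k + 1) = n - k from by omega]
  have this2 : Sfun n m (α + 1) = ∑ k ∈ range (n + 1),
      (-1 : ℤ) ^ k * ((n + 1 + α).choose (n - k) : ℤ) * ((α + 1 + m + k).choose k : ℤ) := by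
    unfold Sfun
    refine Finset.sum_congr rfl fun k hk => ?_
    rw [show n + (α + 1) = n + 1 + α from by omega]
  rw [expand (m + 1), expand m, this2, eq_sub_iff_add_eq, add_assoc]
  congr 1
  rw [← Finset.sum_add_distrib]
  refine Finset.sum_congr rfl fun k hk => ?_
  have pascal : (α + (m + 1) + (k + 1)).choose (k + 1)
      = (α + m + (k + 1)).choose (k + 1) + (α + 1 + m + k).choose k := by
    rw [show α + (m + 1) + (k + 1) = (α + m + k + 1) + 1 from by omega,
      show α + 1 + m + k = α + m + k + 1 from by omega,
      show α + m + (k + 1) = α + m + k + 1 from by omega,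
      Nat.choose_succ_succ', Nat.add_comm]
  rw [pascal]
  push_cast
  ring

lemma Sfun_eq (m : ℕ) : ∀ n α : ℕ, Sfun n m α = (-1 : ℤ) ^ n * (m.choose n : ℤ) := by
  induction m with
  | zero =>
    intro n α
    rw [Sfun_base]
    rcases Nat.eq_zero_or_pos n with h | h
    · subst h; simp
    · rw [if_neg (by omega), Nat.choose_eq_zero_of_lt (by omega)]
      simp
  | succ m ih =>
    intro n α
    cases n with
    | zero => simp [Sfun_zero_left]
    | succ n =>
      rw [Sfun_rec, ih (n + 1) α, ih n (α + 1), Nat.choose_succ_succ' m n]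
      push_cast
      ring

open MeasureTheory Polynomial Finset Set

lemma integrableOn_pow_mul_exp_neg (i : ℕ) :
    IntegrableOn (fun x : ℝ => x ^ i * Real.exp (-x)) (Set.Ioi 0) := by
  have h := Real.GammaIntegral_convergent (s := (i : ℝ) + 1) (by positivity)
  refine h.congr_fun (fun x hx => ?_) measurableSet_Ioi
  dsimp only
  rw [show (i : ℝ) + 1 - 1 = (i : ℝ) from by ring, Real.rpow_natCast, mul_comm]

lemma integral_pow_mul_exp_neg (i : ℕ) :
    ∫ x in Set.Ioi (0 : ℝ), x ^ i * Real.exp (-x) = (i.factorial : ℝ) := by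
  have h := Real.Gamma_eq_integral (s := (i : ℝ) + 1) (by positivity)
  rw [Real.Gamma_nat_eq_factorial] at h
  rw [h]
  refine setIntegral_congr_fun measurableSet_Ioi (fun x hx => ?_)
  rw [show (i : ℝ) + 1 - 1 = (i : ℝ) from by ring, Real.rpow_natCast, mul_comm]

/-- `J p = ∫_0^∞ p(x) e^{-x} dx`. -/
noncomputable def Jint (p : ℝ[X]) : ℝ :=
  ∫ x in Set.Ioi (0 : ℝ), p.eval x * Real.exp (-x)

lemma Jint_eq_sum (p : ℝ[X]) {B : ℕ} (hB : p.natDegree < B) :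
    Jint p = ∑ k ∈ Finset.range B, p.coeff k * (k.factorial : ℝ) := by
  unfold Jint
  have key : ∀ x : ℝ, p.eval x * Real.exp (-x)
      = ∑ k ∈ Finset.range B, p.coeff k * (x ^ k * Real.exp (-x)) := by
    intro x
    rw [Polynomial.eval_eq_sum_range' hB, Finset.sum_mul]
    exact Finset.sum_congr rfl fun k _ => by ring
  simp_rw [key]
  rw [MeasureTheory.integral_finset_sum _
    (fun k _ => ((integrableOn_pow_mul_exp_neg k).const_mul _))]
  exact Finset.sum_congr rfl fun k _ => by
    rw [MeasureTheory.integral_const_mul, integral_pow_mul_exp_neg]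

lemma Jint_zero : Jint 0 = 0 := by
  rw [Jint_eq_sum (0 : ℝ[X]) (B := 1) (by simp)]
  simp

lemma Jint_add (p q : ℝ[X]) : Jint (p + q) = Jint p + Jint q := by
  set B := max p.natDegree q.natDegree + 1 with hB
  have h1 : p.natDegree < B := Nat.lt_succ_of_le (le_max_left _ _)
  have h2 : q.natDegree < B := Nat.lt_succ_of_le (le_max_right _ _)
  have h3 : (p + q).natDegree < B :=
    Nat.lt_succ_of_le ((Polynomial.natDegree_add_le p q))
  rw [Jint_eq_sum p h1, Jint_eq_sum q h2, Jint_eq_sum _ h3, ← Finset.sum_add_distrib]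
  exact Finset.sum_congr rfl fun k _ => by rw [Polynomial.coeff_add]; ring

lemma Jint_sub (p q : ℝ[X]) : Jint (p - q) = Jint p - Jint q := by
  set B := max p.natDegree q.natDegree + 1 with hB
  have h1 : p.natDegree < B := Nat.lt_succ_of_le (le_max_left _ _)
  have h2 : q.natDegree < B := Nat.lt_succ_of_le (le_max_right _ _)
  have h3 : (p - q).natDegree < B :=
    Nat.lt_succ_of_le ((Polynomial.natDegree_sub_le p q))
  rw [Jint_eq_sum p h1, Jint_eq_sum q h2, Jint_eq_sum _ h3, ← Finset.sum_sub_distrib]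
  exact Finset.sum_congr rfl fun k _ => by rw [Polynomial.coeff_sub]; ring

lemma Jint_C_mul (a : ℝ) (p : ℝ[X]) : Jint (C a * p) = a * Jint p := by
  have h1 : p.natDegree < p.natDegree + 1 := Nat.lt_succ_self _
  have h2 : (C a * p).natDegree < p.natDegree + 1 :=
    Nat.lt_succ_of_le (Polynomial.natDegree_C_mul_le a p)
  rw [Jint_eq_sum p h1, Jint_eq_sum _ h2, Finset.mul_sum]
  exact Finset.sum_congr rfl fun k _ => by rw [Polynomial.coeff_C_mul]; ring

lemma Jint_sum {β : Type*} (s : Finset β) (f : β → ℝ[X]) :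
    Jint (∑ i ∈ s, f i) = ∑ i ∈ s, Jint (f i) := by
  classical
  induction s using Finset.induction_on with
  | empty => simp [Jint_zero]
  | insert _ _ h ih =>
    rw [Finset.sum_insert h, Finset.sum_insert h, Jint_add, ih]

lemma Jint_C_mul_X_pow (a : ℝ) (t : ℕ) :
    Jint (C a * X ^ t) = a * (t.factorial : ℝ) := by
  have h : (C a * X ^ t : ℝ[X]).natDegree < t + 1 := by
    refine Nat.lt_succ_of_le ((Polynomial.natDegree_C_mul_le a _).trans ?_)
    simp [Polynomial.natDegree_X_pow]
  rw [Jint_eq_sum _ h]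
  rw [Finset.sum_eq_single t]
  · simp [Polynomial.coeff_C_mul, Polynomial.coeff_X_pow]
  · intro k hk hne
    simp [Polynomial.coeff_C_mul, Polynomial.coeff_X_pow, hne]
  · intro h; exact absurd (Finset.self_mem_range_succ t) h

/-- The Laguerre polynomial as a `Polynomial`. -/
noncomputable def Lpoly (n α : ℕ) : ℝ[X] :=
  ∑ k ∈ Finset.range (n + 1),
    C ((-1 : ℝ) ^ k * ((n + α).choose (n - k) : ℝ) / (k.factorial : ℝ)) * X ^ k

lemma Lpoly_coeff (n α k : ℕ) : (Lpoly n α).coeff k =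
    if k ≤ n then (-1 : ℝ) ^ k * ((n + α).choose (n - k) : ℝ) / (k.factorial : ℝ) else 0 := by
  unfold Lpoly
  rw [Polynomial.finset_sum_coeff]
  simp only [Polynomial.coeff_C_mul, Polynomial.coeff_X_pow, mul_ite, mul_one, mul_zero]
  rw [Finset.sum_ite_eq (Finset.range (n + 1)) k]
  simp [Nat.lt_succ_iff]

lemma genLaguerre_eval (n α : ℕ) (x : ℝ) :
    (∑ k ∈ Finset.range (n + 1),
      (-1 : ℝ) ^ k * ((n + α).choose (n - k) : ℝ) * x ^ k / (k.factorial : ℝ))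
      = (Lpoly n α).eval x := by
  unfold Lpoly
  rw [Polynomial.eval_finset_sum]
  exact Finset.sum_congr rfl fun k _ => by simp; ring

lemma Jint_shift (n α m : ℕ) :
    Jint (X ^ (α + m) * Lpoly n α)
      = ((α + m).factorial : ℝ) * ((-1 : ℝ) ^ n * (m.choose n : ℝ)) := by
  have expand : X ^ (α + m) * Lpoly n α = ∑ k ∈ Finset.range (n + 1),
      C ((-1 : ℝ) ^ k * ((n + α).choose (n - k) : ℝ) / (k.factorial : ℝ)) * X ^ (α + m + k) := by
    unfold Lpoly
    rw [Finset.mul_sum]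
    exact Finset.sum_congr rfl fun k _ => by rw [pow_add, pow_add]; ring
  rw [expand, Jint_sum]
  have term : ∀ k ∈ Finset.range (n + 1),
      Jint (C ((-1 : ℝ) ^ k * ((n + α).choose (n - k) : ℝ) / (k.factorial : ℝ)) * X ^ (α + m + k))
      = ((α + m).factorial : ℝ) *
          ((-1 : ℝ) ^ k * ((n + α).choose (n - k) : ℝ) * ((α + m + k).choose k : ℝ)) := by
    intro k _
    rw [Jint_C_mul_X_pow]
    have hfac : ((α + m + k).factorial : ℝ)
        = ((α + m + k).choose k : ℝ) * (k.factorial : ℝ) * ((α + m).factorial : ℝ) := by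
      have := Nat.add_choose_mul_factorial_mul_factorial (α + m) k
      push_cast [← this]
      ring
    rw [hfac]
    have hk : (k.factorial : ℝ) ≠ 0 := Nat.cast_ne_zero.mpr k.factorial_ne_zero
    field_simp
  rw [Finset.sum_congr rfl term, ← Finset.mul_sum]
  congr 1
  have := Sfun_eq m n α
  have cast : ((Sfun n m α : ℤ) : ℝ)
      = ∑ k ∈ Finset.range (n + 1),
        (-1 : ℝ) ^ k * ((n + α).choose (n - k) : ℝ) * ((α + m + k).choose k : ℝ) := by
    unfold Sfun
    push_cast
    rfl
  rw [← cast, this]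
  push_cast
  ring

lemma Jint_orth_le (α : ℕ) {m n : ℕ} (h : m ≤ n) :
    Jint (X ^ α * (Lpoly m α * Lpoly n α))
      = if m = n then (((n + α).factorial : ℝ) / (n.factorial : ℝ)) else 0 := by
  have expand : X ^ α * (Lpoly m α * Lpoly n α) = ∑ i ∈ Finset.range (m + 1),
      C ((-1 : ℝ) ^ i * ((m + α).choose (m - i) : ℝ) / (i.factorial : ℝ)) *
        (X ^ (α + i) * Lpoly n α) := by
    conv_lhs => rw [Lpoly]
    rw [Finset.sum_mul, Finset.mul_sum]
    exact Finset.sum_congr rfl fun i _ => by rw [pow_add]; ring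
  rw [expand, Jint_sum]
  have term : ∀ i ∈ Finset.range (m + 1),
      Jint (C ((-1 : ℝ) ^ i * ((m + α).choose (m - i) : ℝ) / (i.factorial : ℝ)) *
        (X ^ (α + i) * Lpoly n α))
      = ((-1 : ℝ) ^ i * ((m + α).choose (m - i) : ℝ) / (i.factorial : ℝ)) *
          (((α + i).factorial : ℝ) * ((-1 : ℝ) ^ n * (i.choose n : ℝ))) := by
    intro i _
    rw [Jint_C_mul, Jint_shift]
  rw [Finset.sum_congr rfl term]
  rcases lt_or_eq_of_le h with hlt | heq
  · rw [if_neg (Nat.ne_of_lt hlt)]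
    refine Finset.sum_eq_zero fun i hi => ?_
    rw [Finset.mem_range] at hi
    rw [Nat.choose_eq_zero_of_lt (show i < n by omega)]
    simp
  · subst heq
    rw [if_pos rfl]
    rw [Finset.sum_eq_single_of_mem m (Finset.self_mem_range_succ m)]
    · rw [Nat.sub_self, Nat.choose_zero_right, Nat.choose_self]
      have hm : (m.factorial : ℝ) ≠ 0 := Nat.cast_ne_zero.mpr m.factorial_ne_zero
      have e : α + m = m + α := by omega
      rw [e]
      have hsq : (-1 : ℝ) ^ m * (-1) ^ m = 1 := by
        rw [← pow_add]
        exact Even.neg_one_pow ⟨m, rfl⟩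
      field_simp
      linear_combination hsq
    · intro i hi hne
      rw [Finset.mem_range] at hi
      rw [Nat.choose_eq_zero_of_lt (show i < m by omega)]
      simp

lemma Jint_orth (α m n : ℕ) :
    Jint (X ^ α * (Lpoly m α * Lpoly n α))
      = if m = n then (((n + α).factorial : ℝ) / (n.factorial : ℝ)) else 0 := by
  rcases le_or_gt m n with h | h
  · exact Jint_orth_le α h
  · rw [show Lpoly m α * Lpoly n α = Lpoly n α * Lpoly m α from mul_comm _ _]
    rw [Jint_orth_le α h.le]
    rw [if_neg (by omega), if_neg (by omega)]

lemma Lpoly_zero_derivative (α : ℕ) : Polynomial.derivative (Lpoly 0 α) = 0 := by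
  unfold Lpoly
  simp

lemma X_mul_derivative_Lpoly (n α : ℕ) :
    X * Polynomial.derivative (Lpoly (n + 1) α)
      = C ((n + 1 : ℕ) : ℝ) * Lpoly (n + 1) α - C ((n + 1 + α : ℕ) : ℝ) * Lpoly n α := by
  apply Polynomial.ext
  intro k
  cases k with
  | zero =>
    rw [Polynomial.mul_coeff_zero]
    simp only [Polynomial.coeff_X_zero, zero_mul, Polynomial.coeff_sub,
      Polynomial.coeff_C_mul, Lpoly_coeff]
    rw [if_pos (Nat.zero_le (n+1)), if_pos (Nat.zero_le n)]
    simp only [Nat.sub_zero, pow_zero, one_mul, Nat.factorial_zero, Nat.cast_one, div_one]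
    have hnat := Nat.add_one_mul_choose_eq (n + α) n
    have h' : ((n : ℝ) + α + 1) * ((n + α).choose n : ℝ)
        = ((n + α + 1).choose (n + 1) : ℝ) * ((n : ℝ) + 1) := by
      exact_mod_cast congrArg Nat.cast hnat
    rw [show n + 1 + α = n + α + 1 from by omega]
    push_cast
    linarith [h']
  | succ k =>
    rw [Polynomial.coeff_X_mul, Polynomial.coeff_derivative]
    simp only [Polynomial.coeff_sub, Polynomial.coeff_C_mul, Lpoly_coeff]
    rcases le_or_gt (k + 1) n with h1 | h1
    · rw [if_pos (show k + 1 ≤ n + 1 by omega), if_pos h1]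
      have hnat : (n + 1) * ((n + 1 + α).choose (n - k))
          = (k + 1) * ((n + 1 + α).choose (n - k))
            + (n + 1 + α) * ((n + α).choose (n - (k + 1))) := by
        have h2 := Nat.add_one_mul_choose_eq (n + α) (n - (k + 1))
        have e : n - (k + 1) + 1 = n - k := by omega
        rw [e] at h2
        -- h2 : (n+α+1) * C(n+α, n-(k+1)) = C(n+α+1, n-k) * (n-k)
        have e2 : n + 1 + α = n + α + 1 := by omega
        rw [e2, h2]
        have e3 : n + 1 = (k + 1) + (n - k) := by omega
        rw [e3, Nat.add_mul]
        ring
      have hnat' : ((n : ℝ) + 1) * ((n + 1 + α).choose (n - k) : ℝ)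
          = ((k : ℝ) + 1) * ((n + 1 + α).choose (n - k) : ℝ)
            + ((n : ℝ) + 1 + α) * ((n + α).choose (n - (k + 1)) : ℝ) := by
        exact_mod_cast congrArg Nat.cast hnat
      have e4 : n + 1 - (k + 1) = n - k := by omega
      rw [e4]
      push_cast
      linear_combination (-((-1 : ℝ) ^ (k + 1)) / (((k + 1).factorial : ℝ))) * hnat'
    · rcases le_or_gt (k + 1) (n + 1) with h2 | h2
      · have hk : k = n := by omega
        subst hk
        rw [if_pos (show k + 1 ≤ k + 1 from le_rfl), if_neg (show ¬ k + 1 ≤ k by omega)]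
        rw [Nat.sub_self]
        push_cast
        ring
      · rw [if_neg (show ¬ k + 1 ≤ n + 1 by omega), if_neg (show ¬ k + 1 ≤ n by omega)]
        ring

noncomputable def Tval (a b α : ℕ) : ℝ :=
  (b : ℝ) * (if a = b then ((b + α).factorial : ℝ) / (b.factorial : ℝ) else 0)
    - ((b + α : ℕ) : ℝ) *
        (if a + 1 = b then (((b - 1) + α).factorial : ℝ) / ((b - 1).factorial : ℝ) else 0)

lemma Jint_T (a b α : ℕ) :
    Jint (X ^ (α + 1) * (Lpoly a α * Polynomial.derivative (Lpoly b α))) = Tval a b α := by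
  cases b with
  | zero =>
    rw [Lpoly_zero_derivative]
    simp [Tval, Jint_zero]
  | succ k =>
    have e : X ^ (α + 1) * (Lpoly a α * Polynomial.derivative (Lpoly (k + 1) α))
        = X ^ α * (Lpoly a α * (X * Polynomial.derivative (Lpoly (k + 1) α))) := by
      rw [pow_succ]; ring
    rw [e, X_mul_derivative_Lpoly]
    have e2 : X ^ α * (Lpoly a α * (C ((k + 1 : ℕ) : ℝ) * Lpoly (k + 1) α
          - C ((k + 1 + α : ℕ) : ℝ) * Lpoly k α))
        = C ((k + 1 : ℕ) : ℝ) * (X ^ α * (Lpoly a α * Lpoly (k + 1) α))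
          - C ((k + 1 + α : ℕ) : ℝ) * (X ^ α * (Lpoly a α * Lpoly k α)) := by ring
    rw [e2, Jint_sub, Jint_C_mul, Jint_C_mul, Jint_orth, Jint_orth]
    unfold Tval
    simp only [Nat.add_sub_cancel, Nat.add_right_cancel_iff]

lemma Jint_skew (j k α : ℕ) :
    Jint (X ^ (α + 1) * (Lpoly j α * Polynomial.derivative (Lpoly k α)
        - Polynomial.derivative (Lpoly j α) * Lpoly k α))
      = if j = k + 1 then ((k + 1 + α).factorial : ℝ) / (k.factorial : ℝ)
        else if k = j + 1 then -(((j + 1 + α).factorial : ℝ) / (j.factorial : ℝ))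
        else 0 := by
  have split : X ^ (α + 1) * (Lpoly j α * Polynomial.derivative (Lpoly k α)
        - Polynomial.derivative (Lpoly j α) * Lpoly k α)
      = X ^ (α + 1) * (Lpoly j α * Polynomial.derivative (Lpoly k α))
        - X ^ (α + 1) * (Lpoly k α * Polynomial.derivative (Lpoly j α)) := by ring
  rw [split, Jint_sub, Jint_T, Jint_T]
  unfold Tval
  rcases eq_or_ne j (k + 1) with rfl | h1
  · rw [if_pos rfl]
    rw [if_neg (show ¬ k + 1 = k by omega), if_neg (show ¬ k + 1 + 1 = k by omega),
      if_neg (show ¬ k = k + 1 by omega), if_pos (show k + 1 = k + 1 from rfl)]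
    simp only [Nat.add_sub_cancel]
    rw [show k + 1 + α = (k + α) + 1 from by omega, Nat.factorial_succ]
    have hk : (k.factorial : ℝ) ≠ 0 := Nat.cast_ne_zero.mpr k.factorial_ne_zero
    push_cast
    field_simp
    ring
  · rcases eq_or_ne k (j + 1) with rfl | h2
    · rw [if_neg h1, if_pos rfl]
      rw [if_neg (show ¬ j = j + 1 by omega), if_pos (show j + 1 = j + 1 from rfl),
        if_neg (show ¬ j + 1 = j by omega), if_neg (show ¬ j + 1 + 1 = j by omega)]
      simp only [Nat.add_sub_cancel]
      rw [show j + 1 + α = (j + α) + 1 from by omega, Nat.factorial_succ]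
      have hj : (j.factorial : ℝ) ≠ 0 := Nat.cast_ne_zero.mpr j.factorial_ne_zero
      push_cast
      field_simp
      ring
    · rw [if_neg h1, if_neg h2]
      rcases eq_or_ne j k with rfl | hne
      · rw [sub_self]
      · rw [if_neg hne, if_neg (show ¬ j + 1 = k by omega),
          if_neg (show ¬ k = j by omega), if_neg (show ¬ k + 1 = j by omega)]
        ring



lemma genLaguerre_eq_eval (n α : ℕ) (x : ℝ) :
    genLaguerre n α x = (Lpoly n α).eval x := by
  rw [genLaguerre]; exact genLaguerre_eval n α x

lemma skew_eq (M N : ℕ) (hM : 1 ≤ M) (j k : ℕ) :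
    skewInner M N (fun x => genLaguerre j (2 * (M - N)) (2 * (M : ℝ) * x))
        (fun x => genLaguerre k (2 * (M - N)) (2 * (M : ℝ) * x))
      = (1 / (2 * (M : ℝ))) ^ (2 * (M - N) + 1) *
          Jint (X ^ (2 * (M - N) + 1) *
            (Lpoly j (2 * (M - N)) * Polynomial.derivative (Lpoly k (2 * (M - N)))
              - Polynomial.derivative (Lpoly j (2 * (M - N))) * Lpoly k (2 * (M - N)))) := by
  set α := 2 * (M - N) with hα
  set c : ℝ := 2 * (M : ℝ) with hcdef
  have hc : (0 : ℝ) < c := by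
    rw [hcdef]
    have : (1 : ℝ) ≤ (M : ℝ) := by exact_mod_cast hM
    linarith
  have hfun : ∀ n : ℕ, (fun x : ℝ => genLaguerre n α (c * x))
      = fun x : ℝ => (Lpoly n α).eval (c * x) := by
    intro n; funext x; exact genLaguerre_eq_eval n α (c * x)
  have hderiv : ∀ (n : ℕ) (x : ℝ), deriv (fun x : ℝ => (Lpoly n α).eval (c * x)) x
      = c * (Polynomial.derivative (Lpoly n α)).eval (c * x) := by
    intro n x
    have hinner : HasDerivAt (fun x : ℝ => c * x) c x := by
      simpa using (hasDerivAt_id x).const_mul c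
    have h1 : HasDerivAt (fun x : ℝ => (Lpoly n α).eval (c * x))
        ((Polynomial.derivative (Lpoly n α)).eval (c * x) * c) x :=
      (Polynomial.hasDerivAt (Lpoly n α) (c * x)).comp x hinner
    rw [h1.deriv, mul_comm]
  set R : ℝ[X] := X ^ (α + 1) *
    (Lpoly j α * Polynomial.derivative (Lpoly k α)
      - Polynomial.derivative (Lpoly j α) * Lpoly k α) with hR
  rw [skewInner]
  rw [show (2 * ((M : ℕ) - N)) = α from rfl, show (2 * (M : ℝ)) = c from rfl]
  rw [hfun j, hfun k]
  have key : ∀ x : ℝ,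
      (genLaguerre j α (c * x) * deriv (fun x : ℝ => (Lpoly k α).eval (c * x)) x
        - deriv (fun x : ℝ => (Lpoly j α).eval (c * x)) x * genLaguerre k α (c * x))
        * x ^ (α + 1) * Real.exp (-c * x)
      = (1 / c) ^ α * (R.eval (c * x) * Real.exp (-(c * x))) := by
    intro x
    rw [genLaguerre_eq_eval, genLaguerre_eq_eval, hderiv j x, hderiv k x, neg_mul]
    rw [hR]
    simp only [Polynomial.eval_mul, Polynomial.eval_sub, Polynomial.eval_pow, Polynomial.eval_X]
    rw [mul_pow]
    have hcne : c ≠ 0 := ne_of_gt hc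
    field_simp
    have hcpow : c ^ α * c⁻¹ ^ α = 1 := by rw [← mul_pow, mul_inv_cancel₀ hcne, one_pow]
    linear_combination (-(c * x * x ^ α * ((Lpoly j α).eval (c * x) * (Polynomial.derivative (Lpoly k α)).eval (c * x) - (Polynomial.derivative (Lpoly j α)).eval (c * x) * (Lpoly k α).eval (c * x)))) * hcpow
  simp_rw [key]
  rw [MeasureTheory.integral_const_mul]
  have := MeasureTheory.integral_comp_mul_left_Ioi
    (fun u : ℝ => R.eval u * Real.exp (-u)) 0 hc
  rw [mul_zero] at this
  rw [this, smul_eq_mul]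
  rw [show Jint R = ∫ x in Set.Ioi (0:ℝ), R.eval x * Real.exp (-x) from rfl]
  rw [pow_succ, one_div]
  ring

/-- The skew inner products of the Laguerre polynomials `f_n(x) = L_n^(2(M-N))(2Mx)`:
`⟨f_j, f_k⟩₄` is nonzero only when `|j - k| = 1`, with the stated values. -/
theorem stmt_11 (M N : ℕ) (hN : 1 ≤ N) (hMN : N ≤ M) :
    (∀ k : ℕ,
      skewInner M N (fun x => genLaguerre (k + 1) (2 * (M - N)) (2 * (M : ℝ) * x))
          (fun x => genLaguerre k (2 * (M - N)) (2 * (M : ℝ) * x))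
        = (1 / (2 * (M : ℝ))) ^ (2 * (M - N) + 1) *
            ((k + 1 + 2 * (M - N)).factorial : ℝ) / (k.factorial : ℝ)) ∧
    (∀ j : ℕ,
      skewInner M N (fun x => genLaguerre j (2 * (M - N)) (2 * (M : ℝ) * x))
          (fun x => genLaguerre (j + 1) (2 * (M - N)) (2 * (M : ℝ) * x))
        = -((1 / (2 * (M : ℝ))) ^ (2 * (M - N) + 1) *
            ((j + 1 + 2 * (M - N)).factorial : ℝ) / (j.factorial : ℝ))) ∧
    (∀ j k : ℕ, j ≠ k + 1 → k ≠ j + 1 →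
      skewInner M N (fun x => genLaguerre j (2 * (M - N)) (2 * (M : ℝ) * x))
          (fun x => genLaguerre k (2 * (M - N)) (2 * (M : ℝ) * x)) = 0) := by
  have hM : 1 ≤ M := le_trans hN hMN
  refine ⟨fun k => ?_, fun j => ?_, fun j k h1 h2 => ?_⟩
  · rw [skew_eq M N hM (k + 1) k, Jint_skew, if_pos rfl]
    rw [show k + 1 + 2 * (M - N) = 2 * (M - N) + (k + 1) from by omega] at *
    rw [show 2 * (M - N) + (k + 1) = k + 1 + 2 * (M - N) from by omega]
    ring
  · rw [skew_eq M N hM j (j + 1), Jint_skew, if_neg (by omega), if_pos rfl]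
    ring
  · rw [skew_eq M N hM j k, Jint_skew, if_neg h1, if_neg h2, mul_zero]
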